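/- Let d, g₀, g₁, p, k, η₁ be integers with d ≥ 1, g₀ ≥ 2d, g₁ ≥ 2d, p ≥ 0, k ≥ 0, k + p ≤ d, η₁ ≥ 0, and not both k = 0 and η₁ = 0. Then k·(1 − 2g₀ + 2d − 2p − k) + η₁·(2 − 2g₀ − 2g₁ + 2d) ≤ −2d + 1. -/
import Mathlib

/-- Index estimate for a separating Dehn twist: for (η₀,η₁) = (η₁+k, η₁) ≠ (0,0)
the relative index k(1-2g₀+2d-2p-k) + η₁(2-2g₀-2g₁+2d) is at most 1-2d. -/
theorem separating_index_estimate (d g₀ g₁ p k η₁ : ℤ)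
    (hd : 1 ≤ d) (hg₀ : 2 * d ≤ g₀) (hg₁ : 2 * d ≤ g₁)
    (hp : 0 ≤ p) (hk : 0 ≤ k) (hkp : k + p ≤ d) (hη : 0 ≤ η₁)
    (hne : ¬(k = 0 ∧ η₁ = 0)) :
    k * (1 - 2 * g₀ + 2 * d - 2 * p - k) + η₁ * (2 - 2 * g₀ - 2 * g₁ + 2 * d)
      ≤ -2 * d + 1 := by
  rcases lt_or_eq_of_le hk with hk1 | hk0
  · nlinarith [mul_nonneg hη (by linarith : (0:ℤ) ≤ g₁ - 1), mul_nonneg hk (by linarith : (0:ℤ) ≤ p)]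
  · have hη1 : 1 ≤ η₁ := lt_of_le_of_ne hη (fun h => hne ⟨hk0.symm, h.symm⟩)
    nlinarith [mul_nonneg (by linarith : (0:ℤ) ≤ η₁ - 1) (by linarith : (0:ℤ) ≤ 2*g₀ + 2*g₁ - 2*d - 2)]
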